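/- For all Petri nets N1 and N2 labelled over Actτ: if N1 and N2 are branching ST-bisimilar with explicit divergence, then N1 and N2 are step readiness equivalent. -/

import Mathlib

open scoped Classical

/-- A labelled Petri net over the set `A` of visible actions (a transition labelled
`none` is a τ-(internal) transition), with places drawn from the universe `P` and
transitions drawn from the universe `Tr`.  `pre t p` is the arc weight `F(p,t)` and
`post t p` is the arc weight `F(t,p)`. -/
structure PNet (P Tr A : Type) where
  places : Set P
  trans : Set Tr
  pre : Tr → P → ℕ
  post : Tr → P → ℕ
  M0 : P → ℕ
  l : Tr → Option A
  pre_wf : ∀ t p, pre t p ≠ 0 → t ∈ trans ∧ p ∈ places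
  post_wf : ∀ t p, post t p ≠ 0 → t ∈ trans ∧ p ∈ places
  M0_wf : ∀ p, M0 p ≠ 0 → p ∈ places

namespace PNet

variable {P Tr A : Type}

/-- `•G`, for a finite multiset `G` of transitions. -/
def preStep (N : PNet P Tr A) (G : Tr →₀ ℕ) : P → ℕ :=
  fun p => G.sum fun t n => n * N.pre t p

/-- `G•`, for a finite multiset `G` of transitions. -/
def postStep (N : PNet P Tr A) (G : Tr →₀ ℕ) : P → ℕ :=
  fun p => G.sum fun t n => n * N.post t p

/-- `M [G⟩ M'` : the (nonempty, finite) multiset `G` of transitions is a step from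
`M` to `M'`. -/
def IsStep (N : PNet P Tr A) (M : P → ℕ) (G : Tr →₀ ℕ) (M' : P → ℕ) : Prop :=
  G ≠ 0 ∧ ↑G.support ⊆ N.trans ∧ (∀ p, N.preStep G p ≤ M p) ∧
    ∀ p, M' p = M p - N.preStep G p + N.postStep G p

/-- `[M0⟩` : the set of reachable markings. -/
inductive Reachable (N : PNet P Tr A) : (P → ℕ) → Prop
  | refl : Reachable N N.M0
  | step {M G M'} : Reachable N M → N.IsStep M G M' → Reachable N M'

/-- The transition `t` is enabled under the marking `M`. -/
def enabled (N : PNet P Tr A) (M : P → ℕ) (t : Tr) : Prop :=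
  t ∈ N.trans ∧ ∀ p, N.pre t p ≤ M p

/-- The concurrency relation `t ⌣ u`. -/
def Conc (N : PNet P Tr A) (t u : Tr) : Prop :=
  t ∈ N.trans ∧ u ∈ N.trans ∧ ∃ M, N.Reachable M ∧ ∀ p, N.pre t p + N.pre u p ≤ M p

/-- Firing of a single transition: `M [\{t\}⟩ M'`. -/
def fire (N : PNet P Tr A) (M : P → ℕ) (t : Tr) (M' : P → ℕ) : Prop :=
  N.enabled M t ∧ ∀ p, M' p = M p - N.pre t p + N.post t p

/-- `M —τ→ M'`. -/
def tauFire (N : PNet P Tr A) (M M' : P → ℕ) : Prop :=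
  ∃ t, N.l t = none ∧ N.fire M t M'

/-- `M —a→ M'` for a visible action `a`. -/
def visFire (N : PNet P Tr A) (a : A) (M M' : P → ℕ) : Prop :=
  ∃ t, N.l t = some a ∧ N.fire M t M'

/-- `M ⟹ M'` : the reflexive-transitive closure of `—τ→`. -/
def Taus (N : PNet P Tr A) : (P → ℕ) → (P → ℕ) → Prop :=
  Relation.ReflTransGen N.tauFire

/-- `M ⟹σ⟹ M'` for a sequence `σ` of visible actions. -/
def seqReach (N : PNet P Tr A) : List A → (P → ℕ) → (P → ℕ) → Prop
  | [], M, M' => N.Taus M M'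
  | a :: σ, M, M'' => ∃ M1 M2, N.Taus M M1 ∧ N.visFire a M1 M2 ∧ N.seqReach σ M2 M''

/-- `ℓ(G)(a)` : the number of occurrences of the visible action `a` in the finite
multiset `G` of transitions. -/
noncomputable def labCount (N : PNet P Tr A) (G : Tr →₀ ℕ) (a : A) : ℕ :=
  ∑ t ∈ G.support, if N.l t = some a then G t else 0

/-- `ℓ(G)(a)` for a finite signed multiset `G` of transitions. -/
noncomputable def labCountZ (N : PNet P Tr A) (G : Tr →₀ ℤ) (a : A) : ℤ :=
  ∑ t ∈ G.support, if N.l t = some a then G t else 0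

/-- `ℓ(G) ≡ ∅` : the signed multiset `G` contains no visible actions. -/
def SilentZ (N : PNet P Tr A) (G : Tr →₀ ℤ) : Prop := ∀ a, N.labCountZ G a = 0

/-- The token replacement `⟦G⟧ = G• − •G` of a finite signed multiset of transitions. -/
noncomputable def tok (N : PNet P Tr A) (G : Tr →₀ ℤ) : P → ℤ :=
  fun p => ∑ t ∈ G.support, G t * ((N.post t p : ℤ) - (N.pre t p : ℤ))

/-- The token replacement `⟦G⟧ = G• − •G` of a finite multiset of transitions. -/
noncomputable def tokN (N : PNet P Tr A) (G : Tr →₀ ℕ) : P → ℤ :=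
  fun p => ∑ t ∈ G.support, (G t : ℤ) * ((N.post t p : ℤ) - (N.pre t p : ℤ))

/-- `M —X→` : a step with multiset of visible labels `X ∈ ℕ^Act` is enabled in `M`. -/
def stepTo (N : PNet P Tr A) (M : P → ℕ) (X : A → ℕ) : Prop :=
  ∃ G : Tr →₀ ℕ, G ≠ 0 ∧ ↑G.support ⊆ N.trans ∧ (∀ t ∈ G.support, N.l t ≠ none) ∧
    (∀ p, N.preStep G p ≤ M p) ∧ ∀ a, N.labCount G a = X a

/-- `⟨σ, X⟩` is a step ready pair of `N`. -/
def StepReadyPair (N : PNet P Tr A) (σ : List A) (X : Set (A → ℕ)) : Prop :=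
  ∃ M, N.seqReach σ N.M0 M ∧ (∀ M', ¬ N.tauFire M M') ∧ X = {Y | N.stepTo M Y}

/-- A net is plain iff its labelling is injective and no transition is labelled τ. -/
def Plain (N : PNet P Tr A) : Prop :=
  (∀ t ∈ N.trans, N.l t ≠ none) ∧
    ∀ t ∈ N.trans, ∀ u ∈ N.trans, N.l t = N.l u → t = u

/-- A structural conflict net: concurrent transitions have no common preplace. -/
def StructuralConflict (N : PNet P Tr A) : Prop :=
  ∀ t u, N.Conc t u → ∀ p, N.pre t p = 0 ∨ N.pre u p = 0

/-- A finitary net: every transition has a preplace, and every reachable marking is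
finite and enables only finitely many transitions. -/
def Finitary (N : PNet P Tr A) : Prop :=
  (∀ t ∈ N.trans, ∃ p, N.pre t p ≠ 0) ∧
    ∀ M, N.Reachable M → {p | M p ≠ 0}.Finite ∧ {t | N.enabled M t}.Finite

/-- `N` has a fully reachable pure M. -/
def FullyReachablePureM (N : PNet P Tr A) : Prop :=
  ∃ t u v : Tr, t ∈ N.trans ∧ u ∈ N.trans ∧ v ∈ N.trans ∧
    (∃ p, N.pre t p ≠ 0 ∧ N.pre u p ≠ 0) ∧
    (∃ p, N.pre u p ≠ 0 ∧ N.pre v p ≠ 0) ∧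
    (∀ p, N.pre t p = 0 ∨ N.pre v p = 0) ∧
    ∃ M, N.Reachable M ∧ ∀ p, max (max (N.pre t p) (N.pre u p)) (N.pre v p) ≤ M p

/-- `N` is distributed w.r.t. the distribution `D`. -/
def DistributedWrt (N : PNet P Tr A) {Loc : Type} (D : P ⊕ Tr → Loc) : Prop :=
  (∀ t p, N.pre t p ≠ 0 → D (Sum.inr t) = D (Sum.inl p)) ∧
    ∀ t u, N.Conc t u → D (Sum.inr t) ≠ D (Sum.inr u)

/-- `N` is a distributed net. -/
def Distributed (N : PNet P Tr A) : Prop :=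
  ∃ (Loc : Type) (D : P ⊕ Tr → Loc), N.DistributedWrt D

/-- `N` is essentially distributed w.r.t. the distribution `D`. -/
def EssentiallyDistributedWrt (N : PNet P Tr A) {Loc : Type} (D : P ⊕ Tr → Loc) : Prop :=
  (∀ t p, N.pre t p ≠ 0 → D (Sum.inr t) = D (Sum.inl p)) ∧
    ∀ t u, N.Conc t u → N.l t ≠ none → D (Sum.inr t) ≠ D (Sum.inr u)

def EssentiallyDistributed (N : PNet P Tr A) : Prop :=
  ∃ (Loc : Type) (D : P ⊕ Tr → Loc), N.EssentiallyDistributedWrt D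

/-- `N` is externally distributed w.r.t. the distribution `D`. -/
def ExternallyDistributedWrt (N : PNet P Tr A) {Loc : Type} (D : P ⊕ Tr → Loc) : Prop :=
  (∀ t p, N.pre t p ≠ 0 → D (Sum.inr t) = D (Sum.inl p)) ∧
    ∀ t u, N.Conc t u → N.l t ≠ none → N.l u ≠ none → D (Sum.inr t) ≠ D (Sum.inr u)

def ExternallyDistributed (N : PNet P Tr A) : Prop :=
  ∃ (Loc : Type) (D : P ⊕ Tr → Loc), N.ExternallyDistributedWrt D

/-- The generating relation of the canonical co-location relation: a transition is
co-located with each of its preplaces. -/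
def canonGen (N : PNet P Tr A) : (P ⊕ Tr) → (P ⊕ Tr) → Prop :=
  fun x y => ∃ t p, x = Sum.inr t ∧ y = Sum.inl p ∧ N.pre t p ≠ 0

/-- The canonical co-location relation `≡_C`. -/
def canonRel (N : PNet P Tr A) : (P ⊕ Tr) → (P ⊕ Tr) → Prop :=
  Relation.EqvGen N.canonGen

/-- The canonical distribution, mapping every net element to its `≡_C`-class. -/
def canonDist (N : PNet P Tr A) : (P ⊕ Tr) → Quot N.canonRel := Quot.mk _

/-- The flow relation `F` on `S ∪ T`. -/
def flow (N : PNet P Tr A) : P ⊕ Tr → P ⊕ Tr → ℕ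
  | Sum.inl p, Sum.inr t => N.pre t p
  | Sum.inr t, Sum.inl p => N.post t p
  | _, _ => 0

/-- `F ↾ (S ∪ T⁺)` is acyclic. -/
def AcyclicOn (N : PNet P Tr A) (Tp : Set Tr) : Prop :=
  ∀ x : P ⊕ Tr, ¬ Relation.TransGen
    (fun x y => N.flow x y ≠ 0 ∧ (∀ t, x = Sum.inr t → t ∈ Tp) ∧
      (∀ t, y = Sum.inr t → t ∈ Tp)) x x

/-- A path in `N`, as a nonempty alternating list of net elements. -/
def IsPathList (N : PNet P Tr A) (π : List (P ⊕ Tr)) : Prop :=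
  π ≠ [] ∧ π.Chain' fun x y => N.flow x y ≠ 0

/-- The arc weight `F(π)` of a path `π`. -/
def pathWeight (N : PNet P Tr A) (π : List (P ⊕ Tr)) : ℕ :=
  ((π.zip π.tail).map fun q => N.flow q.1 q.2).prod

/-- A faithful place w.r.t. `T⁺` and `S⁺`, i.e. `|{s} ∩ S⁺| + ∑_{t ∈ T⁺} F(t,s) = 1`. -/
def FaithfulPlace (N : PNet P Tr A) (Tp : Set Tr) (Sp : Set P) (s : P) : Prop :=
  (s ∈ Sp ∧ ∀ t ∈ Tp, N.post t s = 0) ∨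
    (s ∉ Sp ∧ ∃ t ∈ Tp, N.post t s = 1 ∧ ∀ u ∈ Tp, u ≠ t → N.post u s = 0)

/-- A faithful path w.r.t. `T⁺` and `S⁺`: all nodes but the last are transitions
in `T⁺` or faithful places. -/
def FaithfulPath (N : PNet P Tr A) (Tp : Set Tr) (Sp : Set P) (π : List (P ⊕ Tr)) : Prop :=
  N.IsPathList π ∧ ∀ x ∈ π.dropLast,
    (∃ t ∈ Tp, x = Sum.inr t) ∨ ∃ s, x = Sum.inl s ∧ N.FaithfulPlace Tp Sp s

/-- The multiset `*x` of faithful origins of a net element `x`, w.r.t. `T⁺` and `S⁺`. -/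
noncomputable def faithOrig (N : PNet P Tr A) (Tp : Set Tr) (Sp : Set P) (x : P ⊕ Tr) :
    P → ℕ∞ :=
  fun s => sSup {w : ℕ∞ | ∃ π : List (P ⊕ Tr), s ∈ Sp ∧ N.FaithfulPath Tp Sp π ∧
    π.head? = some (Sum.inl s) ∧ π.getLast? = some x ∧ w = (N.pathWeight π : ℕ∞)}

end PNet

/-- A labelled transition system over visible labels `L` (the invisible action τ is
represented by `none`). -/
structure LTS (St L : Type) where
  init : St
  tr : St → Option L → St → Prop

namespace LTS

variable {St L : Type}

/-- `⟹` : the reflexive-transitive closure of `—τ→`. -/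
def Taus (Lt : LTS St L) : St → St → Prop :=
  Relation.ReflTransGen fun s s' => Lt.tr s none s'

/-- `s —(η)→ s'` : an `η`-transition that may stay put when `η = τ`. -/
def OptTr (Lt : LTS St L) (s : St) (η : Option L) (s' : St) : Prop :=
  Lt.tr s η s' ∨ (η = none ∧ s = s')

/-- The state `s` admits an infinite sequence of τ-transitions. -/
def Diverges (Lt : LTS St L) (s : St) : Prop :=
  ∃ f : ℕ → St, f 0 = s ∧ ∀ n, Lt.tr (f n) none (f (n + 1))

def ReachableState (Lt : LTS St L) (s : St) : Prop :=
  Relation.ReflTransGen (fun x y => ∃ η, Lt.tr x η y) Lt.init s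

/-- A deterministic LTS: no reachable state admits a τ-transition, and visible
transitions from reachable states are deterministic. -/
def Deterministic (Lt : LTS St L) : Prop :=
  ∀ s, Lt.ReachableState s →
    (∀ s', ¬ Lt.tr s none s') ∧
      ∀ a s' s'', Lt.tr s (some a) s' → Lt.tr s (some a) s'' → s' = s''

end LTS

/-- `B` is a branching bisimulation between the two LTSs. -/
def IsBranchingBisim {St1 St2 L : Type} (L1 : LTS St1 L) (L2 : LTS St2 L)
    (B : St1 → St2 → Prop) : Prop :=
  B L1.init L2.init ∧
    (∀ s1 s2 η s1', B s1 s2 → L1.tr s1 η s1' →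
      ∃ s2d s2', L2.Taus s2 s2d ∧ L2.OptTr s2d η s2' ∧ B s1 s2d ∧ B s1' s2') ∧
    ∀ s1 s2 η s2', B s1 s2 → L2.tr s2 η s2' →
      ∃ s1d s1', L1.Taus s1 s1d ∧ L1.OptTr s1d η s1' ∧ B s1d s2 ∧ B s1' s2'

/-- The two LTSs are branching bisimilar. -/
def BranchingBisimilar {St1 St2 L : Type} (L1 : LTS St1 L) (L2 : LTS St2 L) : Prop :=
  ∃ B, IsBranchingBisim L1 L2 B

/-- The two LTSs are branching bisimilar with explicit divergence. -/
def BranchingBisimilarED {St1 St2 L : Type} (L1 : LTS St1 L) (L2 : LTS St2 L) : Prop :=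
  ∃ B, IsBranchingBisim L1 L2 B ∧
    ∀ s1 s2, B s1 s2 → (L1.Diverges s1 ↔ L2.Diverges s2)

/-- The visible action phases `a⁺` and `a⁻ⁿ` (here `n` is the 0-based position of the
terminating transition in the sequence of transitions currently firing). -/
inductive STLabel (A : Type) : Type
  | plus (a : A)
  | minus (a : A) (n : ℕ)

/-- The visible action phases `a⁺` and `a⁻` of split semantics. -/
inductive SplitLabel (A : Type) : Type
  | plus (a : A)
  | minus (a : A)

/-- The map `η ↦ η‾` from ST-action phases to split action phases. -/
def STLabel.bar {A : Type} : STLabel A → SplitLabel A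
  | .plus a => .plus a
  | .minus a _ => .minus a

namespace PNet

variable {P Tr A : Type}

/-- The ST-transition relations between ST-markings. -/
def stTr (N : PNet P Tr A) :
    ((P → ℕ) × List Tr) → Option (STLabel A) → ((P → ℕ) × List Tr) → Prop
  | s, some (STLabel.plus a), s' => ∃ t, N.l t = some a ∧ N.enabled s.1 t ∧
      (∀ p, s'.1 p = s.1 p - N.pre t p) ∧ s'.2 = s.2 ++ [t]
  | s, some (STLabel.minus a n), s' => ∃ t, s.2[n]? = some t ∧ N.l t = some a ∧
      s'.2 = s.2.eraseIdx n ∧ ∀ p, s'.1 p = s.1 p + N.post t p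
  | s, none, s' => ∃ t, N.l t = none ∧ N.fire s.1 t s'.1 ∧ s'.2 = s.2

/-- The ST-LTS associated to a net. -/
def stLTS (N : PNet P Tr A) : LTS ((P → ℕ) × List Tr) (STLabel A) :=
  ⟨(N.M0, []), N.stTr⟩

/-- The split transition relations between split markings. -/
def splitTr (N : PNet P Tr A) :
    ((P → ℕ) × Multiset Tr) → Option (SplitLabel A) → ((P → ℕ) × Multiset Tr) → Prop
  | s, some (SplitLabel.plus a), s' => ∃ t, N.l t = some a ∧ N.enabled s.1 t ∧
      (∀ p, s'.1 p = s.1 p - N.pre t p) ∧ s'.2 = s.2 + {t}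
  | s, some (SplitLabel.minus a), s' => ∃ t, N.l t = some a ∧ s.2 = s'.2 + {t} ∧
      ∀ p, s'.1 p = s.1 p + N.post t p
  | s, none, s' => ∃ t, N.l t = none ∧ N.fire s.1 t s'.1 ∧ s'.2 = s.2

/-- The split LTS associated to a net. -/
def splitLTS (N : PNet P Tr A) : LTS ((P → ℕ) × Multiset Tr) (SplitLabel A) :=
  ⟨(N.M0, 0), N.splitTr⟩

end PNet

/-- `N1 ≈Δ_bSTb N2` : branching ST-bisimilarity with explicit divergence. -/
def BranchingSTBisimilarED {P1 T1 P2 T2 A : Type}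
    (N1 : PNet P1 T1 A) (N2 : PNet P2 T2 A) : Prop :=
  BranchingBisimilarED N1.stLTS N2.stLTS

/-- `N1 ≈R N2` : step readiness equivalence. -/
def StepReadinessEquiv {P1 T1 P2 T2 A : Type}
    (N1 : PNet P1 T1 A) (N2 : PNet P2 T2 A) : Prop :=
  ∀ σ X, N1.StepReadyPair σ X ↔ N2.StepReadyPair σ X

/-- A component with interface `(I, O)`. -/
structure NetComponent (P Tr A : Type) where
  net : PNet P Tr A
  I : Set P
  O : Set P
  I_sub : I ⊆ net.places
  O_sub : O ⊆ net.places
  disjIO : Disjoint I O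
  O_noPost : ∀ p ∈ O, ∀ t, net.pre t p = 0

/-- A sequential component with interface: some set `Q` of private places carries
exactly one token initially, and every transition consumes and produces exactly one
token in `Q`. -/
def NetComponent.Sequential {P Tr A : Type} (C : NetComponent P Tr A) : Prop :=
  ∃ Q : Set P, Q ⊆ C.net.places \ (C.I ∪ C.O) ∧
    (∀ t ∈ C.net.trans,
      (∃ q ∈ Q, C.net.pre t q = 1 ∧ ∀ q' ∈ Q, q' ≠ q → C.net.pre t q' = 0) ∧
        ∃ q ∈ Q, C.net.post t q = 1 ∧ ∀ q' ∈ Q, q' ≠ q → C.net.post t q' = 0) ∧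
    ∃ q ∈ Q, C.net.M0 q = 1 ∧ ∀ q' ∈ Q, q' ≠ q → C.net.M0 q' = 0

/-- The components of the family `C` are pairwise composable: disjoint except for
shared interface places, and with pairwise disjoint sets of input places. -/
def Composable {K P Tr A : Type} (C : K → NetComponent P Tr A) : Prop :=
  (∀ k l, k ≠ l → Disjoint (C k).net.trans (C l).net.trans) ∧
    (∀ k l, k ≠ l →
      (C k).net.places ∩ (C l).net.places =
        ((C k).I ∪ (C k).O) ∩ ((C l).I ∪ (C l).O)) ∧
    ∀ k l, k ≠ l → Disjoint (C k).I (C l).I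

/-- `D = ‖_{k ∈ K} C k` : `D` is the asynchronous parallel composition of the
family `C` of components. -/
structure IsParComp {K P Tr A : Type} (C : K → NetComponent P Tr A)
    (D : NetComponent P Tr A) : Prop where
  places_eq : D.net.places = ⋃ k, (C k).net.places
  trans_eq : D.net.trans = ⋃ k, (C k).net.trans
  pre_eq : ∀ k, ∀ t ∈ (C k).net.trans, ∀ p, D.net.pre t p = (C k).net.pre t p
  post_eq : ∀ k, ∀ t ∈ (C k).net.trans, ∀ p, D.net.post t p = (C k).net.post t p
  M0_eq : ∀ p, D.net.M0 p = finsum fun k => (C k).net.M0 p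
  l_eq : ∀ k, ∀ t ∈ (C k).net.trans, D.net.l t = (C k).net.l t
  I_eq : D.I = ⋃ k, (C k).I
  O_eq : D.O = (⋃ k, (C k).O) \ ⋃ k, (C k).I

/-- An LSGA net: an asynchronous parallel composition of sequential components
with interface. -/
def IsLSGA {P Tr A : Type} (N : PNet P Tr A) : Prop :=
  ∃ (K : Type) (C : K → NetComponent P Tr A) (D : NetComponent P Tr A),
    Composable C ∧ (∀ k, (C k).Sequential) ∧ IsParComp C D ∧ D.net = N
namespace STProof

open PNet

variable {P Tr A : Type} {N : PNet P Tr A}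

/-- A marking is (τ-)stable. -/
def Stable (N : PNet P Tr A) (M : P → ℕ) : Prop := ∀ M', ¬ N.tauFire M M'

lemma stable_mono {m m' : P → ℕ} (hle : ∀ p, m' p ≤ m p) (h : Stable N m) :
    Stable N m' := by
  rintro x ⟨t, hl, ⟨⟨ht, hp⟩, _⟩⟩
  exact h (fun p => m p - N.pre t p + N.post t p)
    ⟨t, hl, ⟨ht, fun p => (hp p).trans (hle p)⟩, fun p => rfl⟩

lemma st_stable {m : P → ℕ} (h : Stable N m) (C : List Tr) :
    ∀ s', ¬ N.stLTS.tr (m, C) none s' := by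
  rintro s' ⟨t, hl, hf, _⟩
  exact h s'.1 ⟨t, hl, hf⟩

lemma st_taus_proj {s s' : (P → ℕ) × List Tr} (h : N.stLTS.Taus s s') :
    s'.2 = s.2 ∧ N.Taus s.1 s'.1 := by
  induction h with
  | refl => exact ⟨rfl, Relation.ReflTransGen.refl⟩
  | tail _ hbc ih =>
    obtain ⟨t, hl, hf, hC⟩ := hbc
    exact ⟨hC.trans ih.1, ih.2.tail ⟨t, hl, hf⟩⟩

lemma st_taus_lift {m m' : P → ℕ} (h : N.Taus m m') (C : List Tr) :
    N.stLTS.Taus (m, C) (m', C) := by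
  induction h with
  | refl => exact Relation.ReflTransGen.refl
  | tail _ hbc ih =>
    obtain ⟨t, hl, hf⟩ := hbc
    exact ih.tail ⟨t, hl, hf, rfl⟩

lemma taus_shift {m m' c : P → ℕ} (h : N.Taus m m') :
    N.Taus (fun p => m p + c p) (fun p => m' p + c p) := by
  induction h with
  | refl => exact Relation.ReflTransGen.refl
  | tail _ hbc ih =>
    obtain ⟨t, hl, ⟨⟨ht, hp⟩, he⟩⟩ := hbc
    refine ih.tail ⟨t, hl, ⟨⟨ht, fun p => (hp p).trans (Nat.le_add_right _ _)⟩,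
      fun p => ?_⟩⟩
    show _ + c p = _ + c p - N.pre t p + N.post t p
    have h1 := he p; have h2 := hp p; omega

lemma taus_stable_eq {St L : Type} {Lt : LTS St L} {s s' : St}
    (hs : ∀ s', ¬ Lt.tr s none s') (h : Lt.Taus s s') : s' = s := by
  rcases (Relation.ReflTransGen.cases_head h) with h | ⟨c, hc, _⟩
  · exact h.symm
  · exact absurd hc (hs c)

end STProof
namespace STProof

section Bisim

variable {P1 T1 P2 T2 A : Type} {N1 : PNet P1 T1 A} {N2 : PNet P2 T2 A}
  {B : ((P1 → ℕ) × List T1) → ((P2 → ℕ) × List T2) → Prop}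

lemma tau_match (hB : IsBranchingBisim N1.stLTS N2.stLTS B)
    {m1 m1' : P1 → ℕ} {m2 : P2 → ℕ} (hrel : B (m1, []) (m2, []))
    (h : N1.tauFire m1 m1') :
    ∃ m2', N2.Taus m2 m2' ∧ B (m1', []) (m2', []) := by
  obtain ⟨t, hl, hf⟩ := h
  obtain ⟨s2d, s2', hT, hO, _, hrel'⟩ :=
    hB.2.1 (m1, []) (m2, []) none (m1', []) hrel ⟨t, hl, hf, rfl⟩
  obtain ⟨hC, hTm⟩ := st_taus_proj hT
  rcases hO with htr | ⟨_, heq⟩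
  · obtain ⟨u, hlu, hfu, hCu⟩ := htr
    have : s2' = (s2'.1, []) := by
      rw [Prod.ext_iff]; exact ⟨rfl, by simp [hCu, hC]⟩
    rw [this] at hrel'
    exact ⟨s2'.1, hTm.tail ⟨u, hlu, hfu⟩, hrel'⟩
  · have : s2' = (s2'.1, []) := by
      rw [Prod.ext_iff]; exact ⟨rfl, by simp [← heq, hC]⟩
    rw [this] at hrel'
    exact ⟨s2'.1, heq ▸ hTm, hrel'⟩
  
lemma taus_match (hB : IsBranchingBisim N1.stLTS N2.stLTS B)
    {m1 m1' : P1 → ℕ} {m2 : P2 → ℕ} (hrel : B (m1, []) (m2, []))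
    (h : N1.Taus m1 m1') :
    ∃ m2', N2.Taus m2 m2' ∧ B (m1', []) (m2', []) := by
  induction h with
  | refl => exact ⟨m2, Relation.ReflTransGen.refl, hrel⟩
  | tail _ hbc ih =>
    obtain ⟨m2a, hT, hr⟩ := ih
    obtain ⟨m2', hT', hr'⟩ := tau_match hB hr hbc
    exact ⟨m2', hT.trans hT', hr'⟩

lemma vis_match (hB : IsBranchingBisim N1.stLTS N2.stLTS B)
    {a : A} {m1 m1' : P1 → ℕ} {m2 : P2 → ℕ} (hrel : B (m1, []) (m2, []))
    (h : N1.visFire a m1 m1') :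
    ∃ m2a m2b m2c, N2.Taus m2 m2a ∧ N2.visFire a m2a m2b ∧ N2.Taus m2b m2c ∧
      B (m1', []) (m2c, []) := by
  obtain ⟨t, hlt, ⟨hen, hM'⟩⟩ := h
  -- plus phase in N1
  have step1 : N1.stLTS.tr (m1, []) (some (.plus a))
      (fun p => m1 p - N1.pre t p, [t]) :=
    ⟨t, hlt, hen, fun p => rfl, rfl⟩
  obtain ⟨s2d, s2', hT, hO, _, hrel'⟩ :=
    hB.2.1 _ _ _ _ hrel step1
  obtain ⟨hC, hTm⟩ := st_taus_proj hT
  rcases hO with htr | ⟨h0, _⟩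
  swap; · exact absurd h0 (by simp)
  obtain ⟨t', hlt', hen', hm', hC'⟩ := htr
  -- minus phase in N1
  have step2 : N1.stLTS.tr (fun p => m1 p - N1.pre t p, [t])
      (some (.minus a 0)) (m1', []) := by
    refine ⟨t, rfl, hlt, rfl, fun p => ?_⟩
    show m1' p = (m1 p - N1.pre t p) + N1.post t p
    have := hM' p; have := hen.2 p; omega
  obtain ⟨s3d, s3', hT2, hO2, _, hrel''⟩ :=
    hB.2.1 _ _ _ _ hrel' step2
  obtain ⟨hC2, hTm2⟩ := st_taus_proj hT2
  rcases hO2 with htr2 | ⟨h0, _⟩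
  swap; · exact absurd h0 (by simp)
  obtain ⟨t'', hidx, hlt'', hC'', hm''⟩ := htr2
  -- identify t''
  rw [hC2, hC', hC] at hidx hC''
  simp at hidx
  subst hidx
  -- assemble
  refine ⟨s2d.1, fun p => s2d.1 p - N2.pre t' p + N2.post t' p, s3'.1,
    hTm, ⟨t', hlt', hen', fun p => rfl⟩, ?_, ?_⟩
  · -- taus from m2b to s3'.1
    have hTm2' : N2.Taus (fun p => s2'.1 p + N2.post t' p)
        (fun p => s3d.1 p + N2.post t' p) := taus_shift hTm2
    have e1 : (fun p => s2'.1 p + N2.post t' p) =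
        (fun p => s2d.1 p - N2.pre t' p + N2.post t' p) := by
      funext p; rw [hm' p]
    have e2 : s3'.1 = (fun p => s3d.1 p + N2.post t' p) := by
      funext p; rw [hm'' p]
    rw [e1] at hTm2'; rw [e2]; exact hTm2'
  · have : s3' = (s3'.1, []) := by
      rw [Prod.ext_iff]
      refine ⟨rfl, ?_⟩
      rw [hC'']
      simp
    rw [this] at hrel''
    exact hrel''

end Bisim
end STProof
namespace STProof

section Seq

variable {P Tr A : Type} {N : PNet P Tr A}

lemma taus_seqReach {σ : List A} {m m' m'' : P → ℕ} (h : N.Taus m m')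
    (h2 : N.seqReach σ m' m'') : N.seqReach σ m m'' := by
  cases σ with
  | nil => exact h.trans h2
  | cons a σ =>
    obtain ⟨x, y, h1, h2', h3⟩ := h2
    exact ⟨x, y, h.trans h1, h2', h3⟩

lemma seqReach_taus {σ : List A} {m m' m'' : P → ℕ} (h : N.seqReach σ m m')
    (h2 : N.Taus m' m'') : N.seqReach σ m m'' := by
  induction σ generalizing m with
  | nil => exact Relation.ReflTransGen.trans h h2
  | cons a σ ih =>
    obtain ⟨x, y, h1, h2', h3⟩ := h
    exact ⟨x, y, h1, h2', ih h3⟩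

/-- From a non-diverging marking one reaches a stable marking by τ-steps. -/
lemma exists_stable {m : P → ℕ} (C : List Tr)
    (h : ¬ N.stLTS.Diverges (m, C)) :
    ∃ m', N.Taus m m' ∧ Stable N m' := by
  by_contra hc
  push_neg at hc
  have H : ∀ x : {x // N.Taus m x}, ∃ y, N.tauFire x.1 y := by
    rintro ⟨x, hx⟩
    have := hc x hx
    unfold Stable at this
    push_neg at this
    exact this
  set F : {x // N.Taus m x} → {x // N.Taus m x} :=
    fun x => ⟨Classical.choose (H x), x.2.tail (Classical.choose_spec (H x))⟩
    with hF
  apply h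
  refine ⟨fun n => ((F^[n] ⟨m, Relation.ReflTransGen.refl⟩).1, C), rfl, fun n => ?_⟩
  have hstep : F^[n+1] ⟨m, Relation.ReflTransGen.refl⟩ =
      F (F^[n] ⟨m, Relation.ReflTransGen.refl⟩) := Function.iterate_succ_apply' F n _
  show N.stLTS.tr ((F^[n] ⟨m, Relation.ReflTransGen.refl⟩).1, C) none
    ((F^[n+1] ⟨m, Relation.ReflTransGen.refl⟩).1, C)
  rw [hstep]
  obtain ⟨t, hl, hf⟩ := Classical.choose_spec (H (F^[n] ⟨m, Relation.ReflTransGen.refl⟩))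
  exact ⟨t, hl, hf, rfl⟩

lemma stable_not_diverges {m : P → ℕ} (h : Stable N m) (C : List Tr) :
    ¬ N.stLTS.Diverges (m, C) := by
  rintro ⟨f, hf0, hstep⟩
  have := hstep 0
  rw [hf0] at this
  obtain ⟨t, hl, hfr, _⟩ := this
  exact h _ ⟨t, hl, hfr⟩

end Seq

section Bisim2

variable {P1 T1 P2 T2 A : Type} {N1 : PNet P1 T1 A} {N2 : PNet P2 T2 A}
  {B : ((P1 → ℕ) × List T1) → ((P2 → ℕ) × List T2) → Prop}

lemma seq_transport (hB : IsBranchingBisim N1.stLTS N2.stLTS B) :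
    ∀ (σ : List A) (m1 m1' : P1 → ℕ) (m2 : P2 → ℕ),
      N1.seqReach σ m1 m1' → B (m1, []) (m2, []) →
      ∃ m2', N2.seqReach σ m2 m2' ∧ B (m1', []) (m2', []) := by
  intro σ
  induction σ with
  | nil =>
    intro m1 m1' m2 h hrel
    exact taus_match hB hrel h
  | cons a σ ih =>
    intro m1 m1' m2 h hrel
    obtain ⟨ma, mb, h1, h2, h3⟩ := h
    obtain ⟨m2a, hT, hr⟩ := taus_match hB hrel h1
    obtain ⟨m2x, m2y, m2c, hT1, hvis, hT2, hr2⟩ := vis_match hB hr h2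
    obtain ⟨m2', hs, hr3⟩ := ih mb m1' m2c h3 hr2
    exact ⟨m2', ⟨m2x, m2y, hT.trans hT1, hvis, taus_seqReach hT2 hs⟩, hr3⟩

/-- Transport of the bisimulation along τ-moves of the right state, when the
left state is stable. -/
lemma b_transport (hB : IsBranchingBisim N1.stLTS N2.stLTS B)
    {s1 : (P1 → ℕ) × List T1} (h1 : ∀ s', ¬ N1.stLTS.tr s1 none s')
    {s2 s2' : (P2 → ℕ) × List T2} (hT : N2.stLTS.Taus s2 s2')
    (hrel : B s1 s2) : B s1 s2' := by
  induction hT with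
  | refl => exact hrel
  | tail _ hbc ih =>
    obtain ⟨s1d, s1', hT1, hO, _, hr'⟩ := hB.2.2 _ _ none _ ih hbc
    have he : s1d = s1 := taus_stable_eq h1 hT1
    subst he
    rcases hO with htr | ⟨_, heq⟩
    · exact absurd htr (h1 _)
    · rw [heq]; exact hr'

end Bisim2
end STProof
namespace STProof

section ListG

variable {P Tr A : Type}

/-- The multiset of a list of transitions, as a `Finsupp`. -/
noncomputable def listG {Tr : Type} : List Tr → (Tr →₀ ℕ)
  | [] => 0
  | t :: L => Finsupp.single t 1 + listG L

variable {N : PNet P Tr A}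

lemma labCount_eq_sum (G : Tr →₀ ℕ) (a : A) :
    N.labCount G a = G.sum (fun t n => if N.l t = some a then n else 0) := by
  unfold PNet.labCount Finsupp.sum
  apply Finset.sum_congr rfl
  intro t _
  rfl

lemma labCount_add (G1 G2 : Tr →₀ ℕ) (a : A) :
    N.labCount (G1 + G2) a = N.labCount G1 a + N.labCount G2 a := by
  simp only [labCount_eq_sum]
  exact Finsupp.sum_add_index' (fun t => by simp) (fun t b c => by split <;> simp)

lemma labCount_single (t : Tr) (a : A) :
    N.labCount (Finsupp.single t 1) a = if N.l t = some a then 1 else 0 := by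
  rw [labCount_eq_sum]
  exact Finsupp.sum_single_index (by simp)

lemma preStep_add (G1 G2 : Tr →₀ ℕ) (p : P) :
    N.preStep (G1 + G2) p = N.preStep G1 p + N.preStep G2 p := by
  unfold PNet.preStep
  apply Finsupp.sum_add_index' <;> intro t <;> simp [add_mul]

lemma preStep_single (t : Tr) (p : P) :
    N.preStep (Finsupp.single t 1) p = N.pre t p := by
  unfold PNet.preStep
  rw [Finsupp.sum_single_index (by simp)]
  simp

lemma labCount_listG (L : List Tr) (a : A) :
    N.labCount (listG L) a =
      ((L.map N.l).map (fun o => if o = some a then 1 else 0)).sum := by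
  induction L with
  | nil =>
    show N.labCount 0 a = 0
    rw [labCount_eq_sum]; simp
  | cons t L ih =>
    show N.labCount (Finsupp.single t 1 + listG L) a = _
    rw [labCount_add, labCount_single, ih]
    simp

lemma preStep_listG (L : List Tr) (p : P) :
    N.preStep (listG L) p = (L.map fun t => N.pre t p).sum := by
  induction L with
  | nil =>
    show N.preStep 0 p = 0
    unfold PNet.preStep; simp
  | cons t L ih =>
    show N.preStep (Finsupp.single t 1 + listG L) p = _
    rw [preStep_add, preStep_single, ih]
    simp

lemma listG_pos {L : List Tr} {t : Tr} (h : t ∈ L) : 1 ≤ listG L t := by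
  induction L with
  | nil => simp at h
  | cons u L ih =>
    show 1 ≤ (Finsupp.single u 1 + listG L : Tr →₀ ℕ) t
    rcases List.mem_cons.1 h with h | h
    · subst h
      simp [Finsupp.add_apply, Finsupp.single_apply]
    · have := ih h
      simp only [Finsupp.add_apply]
      omega

lemma mem_of_mem_support_listG {L : List Tr} {t : Tr}
    (h : t ∈ (listG L).support) : t ∈ L := by
  induction L with
  | nil =>
    have : (listG ([] : List Tr)) = 0 := rfl
    rw [this] at h
    simp at h
  | cons u L ih =>
    have h' := Finsupp.support_add (g₁ := Finsupp.single u 1) (g₂ := listG L) h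
    rcases Finset.mem_union.1 h' with h' | h'
    · have := Finsupp.support_single_subset h'
      simp at this
      simp [this]
    · exact List.mem_cons_of_mem _ (ih h')

lemma listG_replicate (t : Tr) (b : ℕ) :
    listG (List.replicate b t) = Finsupp.single t b := by
  induction b with
  | zero =>
    rw [List.replicate_zero]
    show (0 : Tr →₀ ℕ) = Finsupp.single t 0
    rw [Finsupp.single_zero]
  | succ b ih =>
    show Finsupp.single t 1 + listG (List.replicate b t) = _
    rw [ih, ← Finsupp.single_add]
    congr 1
    omega

lemma listG_append (L1 L2 : List Tr) :
    listG (L1 ++ L2) = listG L1 + listG L2 := by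
  induction L1 with
  | nil => simp [listG]
  | cons t L ih =>
    show Finsupp.single t 1 + listG (L ++ L2) = _
    rw [ih]
    show _ = Finsupp.single t 1 + listG L + listG L2
    rw [add_assoc]

lemma exists_listG (G : Tr →₀ ℕ) : ∃ L : List Tr, listG L = G := by
  induction G using Finsupp.induction with
  | zero => exact ⟨[], rfl⟩
  | single_add t b f _ _ ih =>
    obtain ⟨L, hL⟩ := ih
    exact ⟨List.replicate b t ++ L, by rw [listG_append, listG_replicate, hL]⟩

lemma listG_ne_zero {L : List Tr} (h : L ≠ []) : listG L ≠ 0 := by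
  cases L with
  | nil => simp at h
  | cons t L =>
    intro hc
    have h1 := listG_pos (List.mem_cons_self (a := t) (l := L))
    rw [hc] at h1
    simp at h1

end ListG
end STProof
namespace STProof

section Transfer

variable {P1 T1 P2 T2 A : Type} {N1 : PNet P1 T1 A} {N2 : PNet P2 T2 A}
  {B : ((P1 → ℕ) × List T1) → ((P2 → ℕ) × List T2) → Prop}

lemma plus_transfer (hB : IsBranchingBisim N1.stLTS N2.stLTS B) :
    ∀ (L : List T1) (m1 : P1 → ℕ) (C1 : List T1) (m2 : P2 → ℕ) (C2 : List T2),
      B (m1, C1) (m2, C2) → Stable N1 m1 → Stable N2 m2 →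
      (∀ t ∈ L, t ∈ N1.trans) → (∀ t ∈ L, N1.l t ≠ none) →
      (∀ p, (L.map fun t => N1.pre t p).sum ≤ m1 p) →
      ∃ L' : List T2, L'.map N2.l = L.map N1.l ∧ (∀ t ∈ L', t ∈ N2.trans) ∧
        ∀ p, (L'.map fun t => N2.pre t p).sum ≤ m2 p := by
  intro L
  induction L with
  | nil => exact fun _ _ _ _ _ _ _ _ _ _ => ⟨[], rfl, by simp, by simp⟩
  | cons t L ih =>
    intro m1 C1 m2 C2 hrel hs1 hs2 htr hvis hpre
    obtain ⟨a, ha⟩ := Option.ne_none_iff_exists'.1 (hvis t (List.mem_cons_self (a := t) (l := L)))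
    have hpret : ∀ p, N1.pre t p ≤ m1 p := by
      intro p
      have := hpre p
      rw [List.map_cons, List.sum_cons] at this
      omega
    have step : N1.stLTS.tr (m1, C1) (some (.plus a))
        (fun p => m1 p - N1.pre t p, C1 ++ [t]) :=
      ⟨t, ha, ⟨htr t (List.mem_cons_self (a := t) (l := L)), hpret⟩, fun p => rfl, rfl⟩
    obtain ⟨s2d, s2', hT, hO, _, hrel'⟩ := hB.2.1 _ _ _ _ hrel step
    have hs2d : s2d = (m2, C2) := taus_stable_eq (st_stable hs2 C2) hT
    subst hs2d
    rcases hO with htr2 | ⟨h0, _⟩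
    swap; · exact absurd h0 (by simp)
    obtain ⟨m2', C2'⟩ := s2'
    obtain ⟨t', ha', hen', hm', hC'⟩ := htr2
    have hm2' : ∀ p, m2' p = m2 p - N2.pre t' p := hm'
    have hs1' : Stable N1 (fun p => m1 p - N1.pre t p) :=
      stable_mono (fun p => Nat.sub_le _ _) hs1
    have hs2' : Stable N2 m2' :=
      stable_mono (fun p => by rw [hm2' p]; exact Nat.sub_le _ _) hs2
    obtain ⟨L', hmap, htr', hpre'⟩ :=
      ih (fun p => m1 p - N1.pre t p) (C1 ++ [t]) m2' C2' hrel' hs1' hs2'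
        (fun u hu => htr u (List.mem_cons_of_mem _ hu))
        (fun u hu => hvis u (List.mem_cons_of_mem _ hu))
        (fun p => by
          have h1 := hpre p
          rw [List.map_cons, List.sum_cons] at h1
          show (L.map fun u => N1.pre u p).sum ≤ m1 p - N1.pre t p
          omega)
    refine ⟨t' :: L', ?_, ?_, ?_⟩
    · rw [List.map_cons, List.map_cons, hmap, ha, ha']
    · intro u hu
      rcases List.mem_cons.1 hu with h | h
      · subst h; exact hen'.1
      · exact htr' u h
    · intro p
      rw [List.map_cons, List.sum_cons]
      have h1 := hpre' p
      have h2 := hm2' p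
      have h3 : N2.pre t' p ≤ m2 p := hen'.2 p
      omega

lemma stepTo_transfer (hB : IsBranchingBisim N1.stLTS N2.stLTS B)
    {m1 : P1 → ℕ} {m2 : P2 → ℕ} (hs1 : Stable N1 m1) (hs2 : Stable N2 m2)
    (hrel : B (m1, []) (m2, [])) {X : A → ℕ} (h : N1.stepTo m1 X) :
    N2.stepTo m2 X := by
  obtain ⟨G, hG0, hGtr, hGvis, hGpre, hGlab⟩ := h
  obtain ⟨L, rfl⟩ := exists_listG G
  have hmemsup : ∀ t ∈ L, t ∈ (listG L).support := fun t ht =>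
    Finsupp.mem_support_iff.2 (by have := listG_pos ht; omega)
  obtain ⟨L', hmap, htr', hpre'⟩ :=
    plus_transfer hB L m1 [] m2 [] hrel hs1 hs2
      (fun t ht => hGtr (Finset.mem_coe.2 (hmemsup t ht)))
      (fun t ht => hGvis t (hmemsup t ht))
      (fun p => by rw [← preStep_listG]; exact hGpre p)
  have hLne : L ≠ [] := by
    rintro rfl
    exact hG0 rfl
  have hL'ne : L' ≠ [] := by
    intro hc
    apply hLne
    have := congrArg List.length hmap
    rw [hc] at this
    simp at this
    exact List.eq_nil_of_length_eq_zero this.symm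
  refine ⟨listG L', listG_ne_zero hL'ne, ?_, ?_, ?_, ?_⟩
  · intro t ht
    exact htr' t (mem_of_mem_support_listG (Finset.mem_coe.1 ht))
  · intro t ht
    have htL' : t ∈ L' := mem_of_mem_support_listG ht
    have : N2.l t ∈ L'.map N2.l := List.mem_map_of_mem htL'
    rw [hmap] at this
    obtain ⟨u, hu, hul⟩ := List.mem_map.1 this
    intro hc
    exact hGvis u (hmemsup u hu) (hul.trans hc)
  · intro p
    rw [preStep_listG]
    exact hpre' p
  · intro a
    rw [labCount_listG, hmap, ← labCount_listG]
    exact hGlab a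

end Transfer
end STProof
namespace STProof

lemma bisim_flip {St1 St2 L : Type} {L1 : LTS St1 L} {L2 : LTS St2 L}
    {B : St1 → St2 → Prop} (h : IsBranchingBisim L1 L2 B) :
    IsBranchingBisim L2 L1 (fun s2 s1 => B s1 s2) :=
  ⟨h.1, fun s2 s1 η s2' hrel htr => h.2.2 s1 s2 η s2' hrel htr,
    fun s2 s1 η s1' hrel htr => h.2.1 s1 s2 η s1' hrel htr⟩

section Forward

variable {P1 T1 P2 T2 A : Type} {N1 : PNet P1 T1 A} {N2 : PNet P2 T2 A}
  {B : ((P1 → ℕ) × List T1) → ((P2 → ℕ) × List T2) → Prop}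

lemma forward (hB : IsBranchingBisim N1.stLTS N2.stLTS B)
    (hED : ∀ s1 s2, B s1 s2 → (N1.stLTS.Diverges s1 ↔ N2.stLTS.Diverges s2))
    (σ : List A) (X : Set (A → ℕ)) (h : N1.StepReadyPair σ X) :
    N2.StepReadyPair σ X := by
  obtain ⟨M, hseq, hstab, hX⟩ := h
  have hstab' : Stable N1 M := hstab
  obtain ⟨M2, hseq2, hrel⟩ := seq_transport hB σ N1.M0 M N2.M0 hseq hB.1
  -- stabilise M2
  have hnd2 : ¬ N2.stLTS.Diverges (M2, []) := by
    rw [← hED _ _ hrel]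
    exact stable_not_diverges hstab' []
  obtain ⟨M2s, hT2, hstab2⟩ := exists_stable [] hnd2
  have hrel2 : B (M, []) (M2s, []) :=
    b_transport hB (st_stable hstab' []) (st_taus_lift hT2 []) hrel
  refine ⟨M2s, seqReach_taus hseq2 hT2, hstab2, ?_⟩
  rw [hX]
  ext Y
  constructor
  · exact fun hY => stepTo_transfer hB hstab' hstab2 hrel2 hY
  · exact fun hY => stepTo_transfer (bisim_flip hB) hstab2 hstab' hrel2 hY

end Forward
end STProof
/-- Branching ST-bisimilarity with explicit divergence implies
step readiness equivalence. -/
theorem branching_ST_bisim_ED_implies_step_readiness_equiv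
    {P1 T1 P2 T2 A : Type} (N1 : PNet P1 T1 A) (N2 : PNet P2 T2 A)
    (h : BranchingSTBisimilarED N1 N2) :
    StepReadinessEquiv N1 N2 := by
  obtain ⟨B, hB, hED⟩ := h
  intro σ X
  constructor
  · exact STProof.forward hB hED σ X
  · exact STProof.forward (STProof.bisim_flip hB)
      (fun s2 s1 hr => (hED s1 s2 hr).symm) σ X
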